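/- arXiv:1808.03416 — 4 statements merged into one kernel-verified Lean document; each statement's English description precedes it below -/
import Mathlib

section
/- Let V and H be complex Banach spaces with H a Hilbert space, let D be a bounded domain in V, and suppose there exists a holomorphic embedding f : D → B_H into the open unit ball of H. Then V is linearly homeomorphic to H. -/
open Metric Set

/-- If a bounded domain `D` in a complex Banach space `V` admits a holomorphic
embedding into the open unit ball of a Hilbert space `H`, then `V` is linearly homeomorphic
to `H`. -/
theorem stmt_0
    {V : Type*} [NormedAddCommGroup V] [NormedSpace ℂ V] [CompleteSpace V]
    {H : Type*} [NormedAddCommGroup H] [InnerProductSpace ℂ H] [CompleteSpace H]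
    (D : Set V) (hD : IsOpen D) (hDc : IsConnected D) (hDb : Bornology.IsBounded D)
    (f : V → H) (g : H → V)
    (hf : DifferentiableOn ℂ f D)
    (hfD : IsOpen (f '' D)) (hfDc : IsConnected (f '' D))
    (hinj : Set.InjOn f D)
    (hg : DifferentiableOn ℂ g (f '' D))
    (hgf : ∀ z ∈ D, g (f z) = z)
    (hball : f '' D ⊆ ball (0 : H) 1) :
    Nonempty (V ≃L[ℂ] H) := by
  obtain ⟨p, hp⟩ := hDc.nonempty
  have hfp : f p ∈ f '' D := mem_image_of_mem f hp
  have hfg : ∀ w ∈ f '' D, f (g w) = w := by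
    rintro w ⟨z, hz, rfl⟩
    rw [hgf z hz]
  have hfd : DifferentiableAt ℂ f p := (hf p hp).differentiableAt (hD.mem_nhds hp)
  have hgd : DifferentiableAt ℂ g (f p) :=
    (hg _ hfp).differentiableAt (hfD.mem_nhds hfp)
  set A := fderiv ℂ f p with hAdef
  set B := fderiv ℂ g (f p) with hBdef
  have hA : HasFDerivAt f A p := hfd.hasFDerivAt
  have hB : HasFDerivAt g B (f p) := hgd.hasFDerivAt
  have hcomp1 : HasFDerivAt (g ∘ f) (B.comp A) p := hB.comp p hA
  have hid1 : HasFDerivAt (g ∘ f) (ContinuousLinearMap.id ℂ V) p := by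
    refine (hasFDerivAt_id p).congr_of_eventuallyEq ?_
    filter_upwards [hD.mem_nhds hp] with x hx
    exact (hgf x hx : g (f x) = x)
  have hBA : B.comp A = ContinuousLinearMap.id ℂ V := hcomp1.unique hid1
  have hA' : HasFDerivAt f A (g (f p)) := by rw [hgf p hp]; exact hA
  have hcomp2 : HasFDerivAt (f ∘ g) (A.comp B) (f p) := hA'.comp (f p) hB
  have hid2 : HasFDerivAt (f ∘ g) (ContinuousLinearMap.id ℂ H) (f p) := by
    refine (hasFDerivAt_id (f p)).congr_of_eventuallyEq ?_
    filter_upwards [hfD.mem_nhds hfp] with w hw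
    exact (hfg w hw : f (g w) = w)
  have hAB : A.comp B = ContinuousLinearMap.id ℂ H := hcomp2.unique hid2
  exact ⟨ContinuousLinearEquiv.equivOfInverse A B
    (fun x => by simpa using congrArg (fun T => T x) hBA)
    (fun x => by simpa using congrArg (fun T => T x) hAB)⟩
end

section
/- Let Ω be a bounded domain in a Banach space V that is linearly homeomorphic to a Hilbert space, and let (p_k) be a sequence in Ω with lim_{k→∞} σ_Ω(p_k) = 0, where σ_Ω is the squeezing function. Then there is a subsequence (p_j) such that lim_{j→∞} d(p_j, ∂Ω) = 0. -/
open Metric Set Filter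

lemma aux_ball_subset {V : Type*} [NormedAddCommGroup V] [NormedSpace ℝ V]
    {Ω : Set V} (hΩ : IsOpen Ω) {q : V} (hq : q ∈ Ω) :
    ball q (infDist q (frontier Ω)) ⊆ Ω := by
  intro x hx
  by_contra hxΩ
  have hseg : IsPreconnected (segment ℝ q x) := (convex_segment q x).isPreconnected
  have hfr : ∀ y ∈ segment ℝ q x, y ∉ frontier Ω := by
    intro y hy hyf
    have h1 : infDist q (frontier Ω) ≤ dist q y := infDist_le_dist_of_mem hyf
    have h2 : dist q y ≤ dist q x := by
      have := dist_add_dist_of_mem_segment hy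
      nlinarith [dist_nonneg (x := y) (y := x)]
    rw [mem_ball, dist_comm] at hx
    linarith
  have hsub : segment ℝ q x ⊆ Ω ∪ (closure Ω)ᶜ := by
    intro y hy
    by_contra hc
    simp only [mem_union, not_or, mem_compl_iff, not_not] at hc
    exact hfr y hy ⟨hc.2, by rw [hΩ.interior_eq]; exact hc.1⟩
  have hxc : x ∉ closure Ω := fun h =>
    hfr x (right_mem_segment ℝ q x) ⟨h, by rw [hΩ.interior_eq]; exact hxΩ⟩
  rcases hseg Ω (closure Ω)ᶜ hΩ isClosed_closure.isOpen_compl hsub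
      ⟨q, left_mem_segment ℝ q x, hq⟩ ⟨x, right_mem_segment ℝ q x, hxc⟩ with ⟨y, _, hy1, hy2⟩
  exact hy2 (subset_closure hy1)

/-- The squeezing function of a bounded domain `D ⊆ V`, defined via holomorphic embeddings
of `D` into the open unit ball of the Hilbert space `H`. -/
noncomputable def squeezingFun (H : Type*) [NormedAddCommGroup H] [InnerProductSpace ℂ H]
    {V : Type*} [NormedAddCommGroup V] [NormedSpace ℂ V] (D : Set V) (p : V) : ℝ :=
  sSup {r : ℝ | 0 < r ∧ ∃ f : V → H, ∃ g : H → V,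
    DifferentiableOn ℂ f D ∧ IsOpen (f '' D) ∧ Set.InjOn f D ∧
    DifferentiableOn ℂ g (f '' D) ∧ (∀ z ∈ D, g (f z) = z) ∧
    f '' D ⊆ ball (0 : H) 1 ∧ f p = 0 ∧ ball (0 : H) r ⊆ f '' D}

/-- If `(p_k)` is a sequence in a bounded domain `Ω` in a Banach space `V`
linearly homeomorphic to a Hilbert space `H`, with `σ_Ω(p_k) → 0`, then some subsequence
`(p_{j(n)})` satisfies `d(p_{j(n)}, ∂Ω) → 0`. -/
theorem stmt_7
    {V : Type*} [NormedAddCommGroup V] [NormedSpace ℂ V] [CompleteSpace V]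
    {H : Type*} [NormedAddCommGroup H] [InnerProductSpace ℂ H] [CompleteSpace H]
    (φ : V ≃L[ℂ] H)
    (Ω : Set V) (hΩ : IsOpen Ω) (hΩc : IsConnected Ω) (hΩb : Bornology.IsBounded Ω)
    (p : ℕ → V) (hmem : ∀ k, p k ∈ Ω)
    (hlim : Tendsto (fun k => squeezingFun H Ω (p k)) atTop (nhds 0)) :
    ∃ j : ℕ → ℕ, StrictMono j ∧
      Tendsto (fun n => infDist (p (j n)) (frontier Ω)) atTop (nhds 0) := by
  refine ⟨id, strictMono_id, ?_⟩
  simp only [id]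
  rcases eq_empty_or_nonempty (frontier Ω) with hfe | hfne
  · simp only [hfe, infDist_empty]; simpa using tendsto_const_nhds (x := (0:ℝ)) (f := atTop (α := ℕ))
  -- nontriviality
  obtain ⟨y0, hy0⟩ := hfne
  have hy0Ω : y0 ∉ Ω := fun h => (by
    rw [hΩ.frontier_eq, mem_diff] at hy0
    exact hy0.2 h)
  have hVnt : Nontrivial V := ⟨⟨p 0, y0, fun h => hy0Ω (h ▸ hmem 0)⟩⟩
  have hHnt : Nontrivial H := ⟨⟨φ (p 0), φ y0,
    fun h => hy0Ω (φ.injective h ▸ hmem 0)⟩⟩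
  -- bound on Ω
  obtain ⟨R, hR⟩ := isBounded_iff_forall_norm_le.1 hΩb
  have hR0 : 0 ≤ R := le_trans (norm_nonneg _) (hR _ (hmem 0))
  set φL := (φ : V →L[ℂ] H)
  set φS := (φ.symm : H →L[ℂ] V)
  set M : ℝ := ‖φL‖ * (2 * R) + 1 with hM
  have hM1 : 1 ≤ M := le_add_of_nonneg_left (by positivity)
  have hM0 : 0 < M := lt_of_lt_of_le one_pos hM1
  set C : ℝ := ‖φS‖ + 1 with hC
  have hC0 : 0 < C := by positivity
  set K : ℝ := M * C with hK
  have hK0 : 0 < K := mul_pos hM0 hC0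
  -- key inequality
  have key : ∀ k, infDist (p k) (frontier Ω) ≤ K * squeezingFun H Ω (p k) := by
    intro k
    set q := p k
    have hq : q ∈ Ω := hmem k
    set s : ℝ := infDist q (frontier Ω) with hs
    have hs0 : 0 ≤ s := infDist_nonneg
    set S := {r : ℝ | 0 < r ∧ ∃ f : V → H, ∃ g : H → V,
      DifferentiableOn ℂ f Ω ∧ IsOpen (f '' Ω) ∧ Set.InjOn f Ω ∧
      DifferentiableOn ℂ g (f '' Ω) ∧ (∀ z ∈ Ω, g (f z) = z) ∧
      f '' Ω ⊆ ball (0 : H) 1 ∧ f q = 0 ∧ ball (0 : H) r ⊆ f '' Ω} with hS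
    have hbdd : BddAbove S := by
      refine ⟨1, fun r' hr' => ?_⟩
      obtain ⟨hr'0, f, g, _, _, _, _, _, hball1, _, hrsub⟩ := hr'
      by_contra hgt
      push_neg at hgt
      obtain ⟨v, hv⟩ := exists_norm_eq H (le_of_lt one_pos)
      have : v ∈ ball (0 : H) r' := by
        rw [mem_ball, dist_zero_right, hv]; exact hgt
      have := hball1 (hrsub this)
      rw [mem_ball, dist_zero_right, hv] at this
      exact lt_irrefl _ this
    rcases eq_or_lt_of_le hs0 with hseq | hspos
    · have hσ0 : 0 ≤ squeezingFun H Ω q := by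
        apply Real.sSup_nonneg
        intro x hx
        exact le_of_lt hx.1
      rw [← hseq]
      positivity
    -- s > 0 case: construct the embedding
    set c : ℂ := (M : ℂ)⁻¹ with hc
    have hMc : (M : ℂ) ≠ 0 := by
      simp only [ne_eq, Complex.ofReal_eq_zero]
      exact ne_of_gt hM0
    have hc0 : c ≠ 0 := inv_ne_zero hMc
    set f : V → H := fun z => c • φ (z - q) with hf
    set g : H → V := fun w => φ.symm (c⁻¹ • w) + q with hg
    have hgf : ∀ z ∈ Ω, g (f z) = z := by
      intro z _
      simp only [hf, hg, smul_smul, inv_mul_cancel₀ hc0, one_smul,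
        ContinuousLinearEquiv.symm_apply_apply, sub_add_cancel]
    have hfg : ∀ w, f (g w) = w := by
      intro w
      simp only [hf, hg, add_sub_cancel_right, ContinuousLinearEquiv.apply_symm_apply,
        smul_smul, mul_inv_cancel₀ hc0, one_smul]
    have hfdiff : DifferentiableOn ℂ f Ω := by
      apply Differentiable.differentiableOn
      exact ((φL.differentiable.comp (differentiable_id.sub_const q)).const_smul c)
    have hgdiff : DifferentiableOn ℂ g (f '' Ω) := by
      apply Differentiable.differentiableOn
      exact ((φS.differentiable.comp (differentiable_id.const_smul c⁻¹)).add_const q)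
    have hfopen : IsOpen (f '' Ω) := by
      have : f = (fun w : H => c • w) ∘ (⇑φ) ∘ (fun z : V => z - q) := rfl
      rw [this, image_comp, image_comp]
      exact (isOpenMap_smul₀ hc0) _ (φ.isOpenMap _ ((Homeomorph.subRight q).isOpenMap _ hΩ))
    have hfinj : Set.InjOn f Ω := fun a ha b hb hab => by
      have := congrArg g hab
      rwa [hgf a ha, hgf b hb] at this
    have hnormc : ‖c‖ = M⁻¹ := by
      rw [hc, norm_inv, Complex.norm_real, Real.norm_of_nonneg (le_of_lt hM0)]
    have hball1 : f '' Ω ⊆ ball (0 : H) 1 := by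
      rintro _ ⟨z, hz, rfl⟩
      rw [mem_ball, dist_zero_right, hf]
      simp only [norm_smul, hnormc]
      have h1 : ‖φ (z - q)‖ ≤ ‖φL‖ * ‖z - q‖ := φL.le_opNorm _
      have h2 : ‖z - q‖ ≤ 2 * R := by
        calc ‖z - q‖ ≤ ‖z‖ + ‖q‖ := norm_sub_le _ _
        _ ≤ R + R := add_le_add (hR z hz) (hR q hq)
        _ = 2 * R := by ring
      have h3 : ‖φ (z - q)‖ ≤ M - 1 := by
        calc ‖φ (z - q)‖ ≤ ‖φL‖ * ‖z - q‖ := h1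
        _ ≤ ‖φL‖ * (2 * R) := by
            apply mul_le_mul_of_nonneg_left h2 (norm_nonneg _)
        _ = M - 1 := by rw [hM]; ring
      calc M⁻¹ * ‖φ (z - q)‖ ≤ M⁻¹ * (M - 1) := by
            apply mul_le_mul_of_nonneg_left h3 (by positivity)
      _ < 1 := by
          rw [inv_mul_lt_iff₀ hM0]
          linarith
    have hfq : f q = 0 := by simp [hf]
    have hrsub : ball (0 : H) (s / K) ⊆ f '' Ω := by
      intro w hw
      rw [mem_ball, dist_zero_right] at hw
      refine ⟨g w, ?_, hfg w⟩
      have hnorm : ‖g w - q‖ < s := by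
        have : g w - q = φ.symm (c⁻¹ • w) := by simp [hg]
        rw [this]
        have h1 : ‖φ.symm (c⁻¹ • w)‖ ≤ ‖φS‖ * ‖c⁻¹ • w‖ := φS.le_opNorm _
        have h2 : ‖c⁻¹ • w‖ = M * ‖w‖ := by
          rw [norm_smul, hc, inv_inv, Complex.norm_real,
            Real.norm_of_nonneg (le_of_lt hM0)]
        calc ‖φ.symm (c⁻¹ • w)‖ ≤ ‖φS‖ * (M * ‖w‖) := by rw [← h2]; exact h1
        _ ≤ C * (M * ‖w‖) := by
            apply mul_le_mul_of_nonneg_right _ (by positivity)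
            rw [hC]; linarith
        _ < C * (M * (s / K)) := by
            apply mul_lt_mul_of_pos_left _ hC0
            exact mul_lt_mul_of_pos_left hw hM0
        _ = s := by rw [hK]; field_simp
      have : g w ∈ ball q s := by rwa [mem_ball, dist_eq_norm]
      exact aux_ball_subset hΩ hq this
    have hmemS : s / K ∈ S := by
      refine ⟨by positivity, f, g, hfdiff, hfopen, hfinj, hgdiff, hgf, hball1, hfq, hrsub⟩
    have : s / K ≤ squeezingFun H Ω q := le_csSup hbdd hmemS
    calc s = K * (s / K) := by field_simp
    _ ≤ K * squeezingFun H Ω q := by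
        apply mul_le_mul_of_nonneg_left this (le_of_lt hK0)
  -- squeeze
  have hKlim : Tendsto (fun k => K * squeezingFun H Ω (p k)) atTop (nhds 0) := by
    have := hlim.const_mul K
    simpa using this
  exact squeeze_zero (fun k => infDist_nonneg) key hKlim
end

section
/- Let U be a connected open subset of a Banach space V, let D be an open subset of V with U ∩ D ≠ ∅ and U ⊄ D, and let W₀ be a connected component of U ∩ D. Then ∂W₀ ∩ ∂D ∩ U ≠ ∅. -/
open Set

/-- If `U` is a connected open set in a Banach space `V`, `D ⊆ V` is open with
`U ∩ D ≠ ∅` and `U ⊄ D`, and `W₀` is a connected component of `U ∩ D`, then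
`∂W₀ ∩ ∂D ∩ U ≠ ∅`. -/
theorem stmt_9
    {V : Type*} [NormedAddCommGroup V] [NormedSpace ℝ V] [CompleteSpace V]
    (U D : Set V) (hU : IsOpen U) (hUc : IsConnected U) (hD : IsOpen D)
    (hne : (U ∩ D).Nonempty) (hns : ¬ U ⊆ D)
    (x : V) (hx : x ∈ U ∩ D) :
    (frontier (connectedComponentIn (U ∩ D) x) ∩ frontier D ∩ U).Nonempty := by
  by_contra hcon
  rw [Set.not_nonempty_iff_eq_empty] at hcon
  set W₀ := connectedComponentIn (U ∩ D) x with hW₀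
  have hWopen : IsOpen W₀ := (hU.inter hD).connectedComponentIn
  have hWsub : W₀ ⊆ U ∩ D := connectedComponentIn_subset _ _
  -- closure W₀ ∩ U ⊆ W₀
  have hclosed : closure W₀ ∩ U ⊆ W₀ := by
    rintro p ⟨hpc, hpU⟩
    by_cases hpW : p ∈ W₀
    · exact hpW
    have hpf : p ∈ frontier W₀ := ⟨hpc, by rwa [hWopen.interior_eq]⟩
    have hpD : p ∈ D := by
      have hpcD : p ∈ closure D := closure_mono (hWsub.trans inter_subset_right) hpc
      by_contra hpD
      have : p ∈ frontier D := ⟨hpcD, by rwa [hD.interior_eq]⟩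
      have : p ∈ (∅ : Set V) := hcon ▸ ⟨⟨hpf, this⟩, hpU⟩
      exact this
    -- p ∈ U ∩ D, its component is open nbhd of p, meets W₀
    have hpUD : p ∈ U ∩ D := ⟨hpU, hpD⟩
    have hcomp : IsOpen (connectedComponentIn (U ∩ D) p) :=
      (hU.inter hD).connectedComponentIn
    have hmem : p ∈ connectedComponentIn (U ∩ D) p := mem_connectedComponentIn hpUD
    obtain ⟨q, hq1, hq2⟩ := mem_closure_iff.mp hpc _ hcomp hmem
    have h1 : connectedComponentIn (U ∩ D) q = connectedComponentIn (U ∩ D) p :=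
      (connectedComponentIn_eq hq1).symm
    have h2 : connectedComponentIn (U ∩ D) q = W₀ :=
      (connectedComponentIn_eq hq2).symm
    rw [← h2, h1]
    exact hmem
  -- disconnect U
  obtain ⟨y, hyU, hyD⟩ := not_subset.mp hns
  have hyW : y ∉ closure W₀ := fun h => hyD (hWsub (hclosed ⟨h, hyU⟩)).2
  have := hUc.isPreconnected W₀ (closure W₀)ᶜ hWopen isClosed_closure.isOpen_compl
    (fun z hz => by
      by_cases h : z ∈ closure W₀
      · exact Or.inl (hclosed ⟨h, hz⟩)
      · exact Or.inr h)
    ⟨x, (hWsub (mem_connectedComponentIn hx)).1, mem_connectedComponentIn hx⟩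
    ⟨y, hyU, hyW⟩
  obtain ⟨z, _, hz1, hz2⟩ := this
  exact hz2 (subset_closure hz1)
end

section
/- Let H be a complex Hilbert space with orthonormal basis containing a distinguished unit vector e¹, write z = z₁e¹ + z^⊥ with z^⊥ ⊥ e¹. For R > 0, z ∈ B_H(R e¹, R) if and only if ‖z‖² < 2R·Re z₁. Moreover, with the Cayley transform Φ(z) = ((z₁−1)/(z₁+1))e¹ + (√2/(z₁+1))z^⊥ defined on {Re z₁ > 0}, and the dilation L_λ(z) = (z₁/λ)e¹ + (1/√λ)z^⊥ for λ > 0, one has Φ(L_λ(B_H(Re¹, R))) ⊂ B_H(0, √(1+R)). -/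
open Metric Set

variable {H : Type*} [NormedAddCommGroup H] [InnerProductSpace ℂ H]

/-- The Cayley transform `Φ(z) = ((z₁−1)/(z₁+1))e + (√2/(z₁+1))z^⊥` associated with a unit
vector `e`, where `z₁ = ⟪e, z⟫` and `z^⊥ = z − z₁e`. -/
noncomputable def cayley (e : H) (z : H) : H :=
  (((inner ℂ e z : ℂ) - 1) / ((inner ℂ e z : ℂ) + 1)) • e +
    ((Real.sqrt 2 : ℂ) / ((inner ℂ e z : ℂ) + 1)) • (z - (inner ℂ e z : ℂ) • e)

/-- The dilation `L_λ(z) = (z₁/λ)e + (1/√λ)z^⊥`. -/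
noncomputable def dilation (e : H) (lam : ℝ) (z : H) : H :=
  ((inner ℂ e z : ℂ) / (lam : ℂ)) • e +
    ((Real.sqrt lam : ℂ))⁻¹ • (z - (inner ℂ e z : ℂ) • e)

/-- Auxiliary real inequality. -/
lemma stmt_18_aux (R lam x y u : ℝ) (hR : 0 < R) (hlam : 0 < lam) (hx : 0 < x) (hu : 0 ≤ u)
    (h : x*x + y*y + u < 2*R*x) :
    ((x/lam-1)*(x/lam-1)+(y/lam)*(y/lam)) + 2/lam*u
      < (1+R)*((x/lam+1)*(x/lam+1)+(y/lam)*(y/lam)) := by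
  have hl : lam ≠ 0 := hlam.ne'
  set t := x/lam with ht
  set s := y/lam with hs
  have hxt : x = lam * t := by rw [ht]; field_simp
  have hys : y = lam * s := by rw [hs]; field_simp
  have h2u : 2/lam*u = 2*u/lam := by ring
  rw [h2u]
  rw [hxt, hys] at h; rw [hxt] at hx
  have htpos : 0 < t := by nlinarith
  have hv : 2*u/lam < 4*R*t - 2*lam*(t^2+s^2) := by
    rw [div_lt_iff₀ hlam]; nlinarith
  nlinarith [mul_nonneg hR.le (sq_nonneg (t-1)), mul_nonneg hR.le (sq_nonneg s),
    mul_nonneg hlam.le (sq_nonneg t), mul_nonneg hlam.le (sq_nonneg s), htpos]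

/-- For a unit vector `e` in a Hilbert space `H`: `z ∈ B_H(Re, R)` iff
`‖z‖² < 2R·Re z₁` where `z₁ = ⟪e, z⟫`; and for `λ > 0` the Cayley transform composed with
the dilation maps `B_H(Re, R)` into `B_H(0, √(1+R))`. -/
theorem stmt_18 [CompleteSpace H]
    (e : H) (he : ‖e‖ = 1) (R lam : ℝ) (hR : 0 < R) (hlam : 0 < lam) :
    (∀ z : H, z ∈ ball (R • e) R ↔ ‖z‖ ^ 2 < 2 * R * (inner ℂ e z : ℂ).re) ∧
    (cayley e ∘ dilation e lam) '' ball (R • e) R ⊆ ball (0 : H) (Real.sqrt (1 + R)) := by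
  letI : InnerProductSpace ℝ H := InnerProductSpace.rclikeToReal ℂ H
  have hmem : ∀ z : H, z ∈ ball (R • e) R ↔ ‖z‖ ^ 2 < 2 * R * (inner ℂ e z : ℂ).re := by
    intro z
    rw [mem_ball, dist_eq_norm]
    have h1 : ‖z - R • e‖ ^ 2 = ‖z‖ ^ 2 - 2 * R * (inner ℂ e z : ℂ).re + R ^ 2 := by
      rw [norm_sub_sq_real, real_inner_smul_right, norm_smul, he, mul_one, Real.norm_eq_abs,
        abs_of_pos hR]
      have h2 : (inner ℝ z e : ℝ) = (inner ℂ e z : ℂ).re := by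
        rw [real_inner_eq_re_inner (𝕜 := ℂ) z e]
        simp only [RCLike.re_to_complex]
        rw [← inner_conj_symm e z, Complex.conj_re]
      rw [h2]; ring
    constructor
    · intro h
      have h3 := pow_lt_pow_left₀ h (norm_nonneg _) two_ne_zero
      linarith [h1, h3]
    · intro h
      have h2 : ‖z - R • e‖ ^ 2 < R ^ 2 := by linarith [h1]
      exact lt_of_pow_lt_pow_left₀ 2 hR.le h2
  refine ⟨hmem, ?_⟩
  rintro ζ ⟨z, hz, rfl⟩
  rw [hmem z] at hz
  set z1 : ℂ := inner ℂ e z with hz1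
  set p : H := z - z1 • e with hpdef
  have hee : (inner ℂ e e : ℂ) = 1 := by
    rw [inner_self_eq_norm_sq_to_K, he]; norm_num
  have hep : (inner ℂ e p : ℂ) = 0 := by
    rw [hpdef, inner_sub_right, inner_smul_right, hee, mul_one, ← hz1, sub_self]
  have hwin : (inner ℂ e (dilation e lam z) : ℂ) = z1 / lam := by
    rw [dilation, inner_add_right, inner_smul_right, inner_smul_right, ← hz1, ← hpdef, hee, hep,
      mul_one, mul_zero, add_zero]
  have hwperp : dilation e lam z - (inner ℂ e (dilation e lam z) : ℂ) • e
      = ((Real.sqrt lam : ℂ))⁻¹ • p := by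
    rw [hwin, dilation, ← hz1, ← hpdef, add_sub_cancel_left]
  set c : ℂ := z1 / lam with hc
  rw [hwin] at hwperp
  have hcre : c.re = z1.re / lam := Complex.div_ofReal_re z1 lam
  have hcim : c.im = z1.im / lam := Complex.div_ofReal_im z1 lam
  have h0le : (0:ℝ) ≤ ‖z‖^2 := sq_nonneg _
  have hz1re : 0 < z1.re := by nlinarith [hz, h0le, hR]
  have hc1 : c + 1 ≠ 0 := by
    intro h
    have h2 : (c+1).re = 0 := by rw [h]; simp
    rw [Complex.add_re, Complex.one_re, hcre] at h2
    have : 0 < z1.re / lam := div_pos hz1re hlam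
    linarith
  have hz_decomp : z = z1 • e + p := by rw [hpdef]; abel
  have hpyth : ‖z‖^2 = Complex.normSq z1 + ‖p‖^2 := by
    have h0 : (inner ℂ (z1 • e) p : ℂ) = 0 := by rw [inner_smul_left, hep, mul_zero]
    have h1 := norm_add_sq_eq_norm_sq_add_norm_sq_of_inner_eq_zero (𝕜 := ℂ) (z1 • e) p h0
    rw [← hz_decomp] at h1
    have hns : ‖z1 • e‖ = ‖z1‖ := by
      rw [norm_smul, he, mul_one]
    rw [pow_two, h1, hns, Complex.normSq_eq_norm_sq]
    ring
  have hcay : (cayley e ∘ dilation e lam) z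
      = ((c - 1)/(c + 1)) • e
        + (((Real.sqrt 2 : ℂ)/(c+1)) * ((Real.sqrt lam : ℂ))⁻¹) • p := by
    simp only [Function.comp_apply, cayley, hwin, hwperp, ← hc, smul_smul]
  set a : ℂ := (c - 1)/(c + 1) with ha
  set b : ℂ := ((Real.sqrt 2 : ℂ)/(c+1)) * ((Real.sqrt lam : ℂ))⁻¹ with hb
  have horth : (inner ℂ (a • e) (b • p) : ℂ) = 0 := by
    rw [inner_smul_left, inner_smul_right, hep]; ring
  have hnormsq : ‖(cayley e ∘ dilation e lam) z‖^2
      = Complex.normSq a + Complex.normSq b * ‖p‖^2 := by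
    rw [hcay]
    have h1 := norm_add_sq_eq_norm_sq_add_norm_sq_of_inner_eq_zero (𝕜 := ℂ) (a • e) (b • p) horth
    rw [pow_two, h1, norm_smul, norm_smul, he,
      Complex.normSq_eq_norm_sq, Complex.normSq_eq_norm_sq]
    ring
  have hQ : 0 < Complex.normSq (c+1) := Complex.normSq_pos.mpr hc1
  have hfin : ‖(cayley e ∘ dilation e lam) z‖^2 < 1 + R := by
    rw [hnormsq]
    have hnsa : Complex.normSq a = Complex.normSq (c-1) / Complex.normSq (c+1) := by
      rw [ha, Complex.normSq_div]
    have hs2 : Complex.normSq ((Real.sqrt 2 : ℝ) : ℂ) = 2 := by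
      rw [Complex.normSq_ofReal, Real.mul_self_sqrt (by norm_num)]
    have hsl : Complex.normSq ((Real.sqrt lam : ℝ) : ℂ) = lam := by
      rw [Complex.normSq_ofReal, Real.mul_self_sqrt hlam.le]
    have hnsb : Complex.normSq b = 2 / Complex.normSq (c+1) * lam⁻¹ := by
      rw [hb, Complex.normSq_mul, Complex.normSq_div, Complex.normSq_inv, hs2, hsl]
    rw [hnsa, hnsb]
    have hrw : Complex.normSq (c-1) / Complex.normSq (c+1)
        + 2 / Complex.normSq (c+1) * lam⁻¹ * ‖p‖^2
        = (Complex.normSq (c-1) + 2/lam * ‖p‖^2) / Complex.normSq (c+1) := by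
      field_simp
    rw [hrw, div_lt_iff₀ hQ]
    have hu : z1.re * z1.re + z1.im * z1.im + ‖p‖^2 < 2*R*z1.re := by
      have := hz
      rw [hpyth, Complex.normSq_apply] at this
      linarith
    have key := stmt_18_aux R lam z1.re z1.im (‖p‖^2) hR hlam hz1re (sq_nonneg _) hu
    rw [Complex.normSq_apply, Complex.normSq_apply, Complex.sub_re, Complex.sub_im,
      Complex.add_re, Complex.add_im, Complex.one_re, Complex.one_im, hcre, hcim]
    linarith [key]
  rw [mem_ball, dist_zero_right]
  have h1R : (0:ℝ) ≤ 1 + R := by linarith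
  have hs : Real.sqrt (1+R) ^ 2 = 1 + R := Real.sq_sqrt h1R
  refine lt_of_pow_lt_pow_left₀ 2 (Real.sqrt_nonneg _) ?_
  rw [hs]
  exact hfin
end
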